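/- Let M and L be stable matchings of a bipartite graph with bipartition (I, J). Define M ∨ L as the set of edges obtained by choosing, at every vertex m ∈ I covered by the matchings, the edge among {M-edge at m, L-edge at m} that is less preferred by m (the larger one in <_m), together with all common edges of M and L. Then M ∨ L is a stable matching. -/

import Mathlib

/-- A finite bipartite graph with strict preference orders.
Vertices on one side have type `I` ("men"), on the other side `J` ("women").
Edges are pairs `(m, w) : I × J`; the edge set is `E`.
`pI m e f` means vertex `m ∈ I` strictly prefers edge `e` to edge `f`
(both incident to `m`); similarly `pJ` for the `J` side.
The axioms say that each `pI m` (resp. `pJ w`) is a strict linear order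
on the set `δ(m)` (resp. `δ(w)`) of edges of `E` incident to the vertex. -/
structure PrefSystem (I J : Type) where
  E : Finset (I × J)
  pI : I → (I × J) → (I × J) → Prop
  pJ : J → (I × J) → (I × J) → Prop
  pI_irrefl : ∀ m e, ¬ pI m e e
  pI_trans : ∀ m e f g, pI m e f → pI m f g → pI m e g
  pI_total : ∀ m e f, e ∈ E → f ∈ E → e.1 = m → f.1 = m → e ≠ f → pI m e f ∨ pI m f e
  pJ_irrefl : ∀ w e, ¬ pJ w e e
  pJ_trans : ∀ w e f g, pJ w e f → pJ w f g → pJ w e g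
  pJ_total : ∀ w e f, e ∈ E → f ∈ E → e.2 = w → f.2 = w → e ≠ f → pJ w e f ∨ pJ w f e

variable {I J : Type}

/-- `M` is a matching: a set of edges of `G`, no two of which share a vertex. -/
def IsMatching (G : PrefSystem I J) (M : Finset (I × J)) : Prop :=
  M ⊆ G.E ∧ ∀ e ∈ M, ∀ f ∈ M, e ≠ f → e.1 ≠ f.1 ∧ e.2 ≠ f.2

/-- The edge `e ∈ E \ M` blocks `M` if, for each endpoint `v` of `e`,
either `v` is uncovered by `M` or `v` strictly prefers `e` to its `M`-edge. -/
def Blocks (G : PrefSystem I J) (M : Finset (I × J)) (e : I × J) : Prop :=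
  e ∈ G.E ∧ e ∉ M ∧ (∀ f ∈ M, f.1 = e.1 → G.pI e.1 e f) ∧
    (∀ f ∈ M, f.2 = e.2 → G.pJ e.2 e f)

/-- A stable matching: a matching with no blocking edge. -/
def IsStable (G : PrefSystem I J) (M : Finset (I × J)) : Prop :=
  IsMatching G M ∧ ∀ e, ¬ Blocks G M e

section JoinAux

variable {I J : Type}

lemma uniq1 {G : PrefSystem I J} {A : Finset (I × J)} (hA : IsMatching G A)
    {e f : I × J} (he : e ∈ A) (hf : f ∈ A) (h : e.1 = f.1) : e = f := by
  by_contra hne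
  exact (hA.2 e he f hf hne).1 h

lemma uniq2 {G : PrefSystem I J} {A : Finset (I × J)} (hA : IsMatching G A)
    {e f : I × J} (he : e ∈ A) (hf : f ∈ A) (h : e.2 = f.2) : e = f := by
  by_contra hne
  exact (hA.2 e he f hf hne).2 h

lemma not_blocks_woman {G : PrefSystem I J} {A : Finset (I × J)} (hA : IsStable G A)
    {e : I × J} (heE : e ∈ G.E) (heA : e ∉ A)
    (hman : ∀ f ∈ A, f.1 = e.1 → G.pI e.1 e f) :
    ∃ h ∈ A, h.2 = e.2 ∧ G.pJ e.2 h e := by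
  have hw : ¬ ∀ f ∈ A, f.2 = e.2 → G.pJ e.2 e f :=
    fun h => hA.2 e ⟨heE, heA, hman, h⟩
  push_neg at hw
  obtain ⟨f, hfA, hf2, hnp⟩ := hw
  have hne : f ≠ e := fun h => heA (h ▸ hfA)
  rcases G.pJ_total e.2 e f heE (hA.1.1 hfA) rfl hf2 hne.symm with h | h
  · exact absurd h hnp
  · exact ⟨f, hfA, hf2, h⟩

lemma not_blocks_man {G : PrefSystem I J} {A : Finset (I × J)} (hA : IsStable G A)
    {e : I × J} (heE : e ∈ G.E) (heA : e ∉ A)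
    (hwoman : ∀ f ∈ A, f.2 = e.2 → G.pJ e.2 e f) :
    ∃ g ∈ A, g.1 = e.1 ∧ G.pI e.1 g e := by
  have hw : ¬ ∀ f ∈ A, f.1 = e.1 → G.pI e.1 e f :=
    fun h => hA.2 e ⟨heE, heA, h, hwoman⟩
  push_neg at hw
  obtain ⟨f, hfA, hf1, hnp⟩ := hw
  have hne : f ≠ e := fun h => heA (h ▸ hfA)
  rcases G.pI_total e.1 e f heE (hA.1.1 hfA) rfl hf1 hne.symm with h | h
  · exact absurd h hnp
  · exact ⟨f, hfA, hf1, h⟩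

lemma chain {G : PrefSystem I J} [Fintype I] [Fintype J]
    {A B : Finset (I × J)} (hA : IsStable G A) (hB : IsStable G B)
    {e₀ : I × J} (he₀A : e₀ ∈ A) (he₀B : e₀ ∉ B)
    (hP : ∃ g ∈ B, g.1 = e₀.1 ∧ G.pI e₀.1 g e₀) :
    ∃ g ∈ B, g.2 = e₀.2 ∧ G.pJ e₀.2 e₀ g ∧ ∃ e' ∈ A, e'.1 = g.1 := by
  classical
  set Good : I × J → Prop :=
    fun e => e ∈ A ∧ e ∉ B ∧ ∃ g ∈ B, g.1 = e.1 ∧ G.pI e.1 g e with hGoodDef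
  have step : ∀ e, Good e →
      ∃ e', Good e' ∧ ∃ g ∈ B, g.1 = e.1 ∧ g.2 = e'.2 ∧ G.pJ e'.2 e' g := by
    rintro e ⟨heA, heB, g, hgB, hg1, hgp⟩
    have hgE : g ∈ G.E := hB.1.1 hgB
    have hgA : g ∉ A := by
      intro hgA
      have : g = e := uniq1 hA.1 hgA heA hg1
      subst this
      exact G.pI_irrefl _ _ hgp
    have hmang : ∀ f ∈ A, f.1 = g.1 → G.pI g.1 g f := by
      intro f hfA hf1
      have : f = e := uniq1 hA.1 hfA heA (hf1.trans hg1)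
      subst this
      rw [hg1]
      exact hgp
    obtain ⟨e', he'A, he'2, he'p⟩ := not_blocks_woman hA hgE hgA hmang
    have he'B : e' ∉ B := by
      intro h
      have : e' = g := uniq2 hB.1 h hgB he'2
      subst this
      exact G.pJ_irrefl _ _ he'p
    have hwe' : ∀ f ∈ B, f.2 = e'.2 → G.pJ e'.2 e' f := by
      intro f hfB hf2
      have : f = g := uniq2 hB.1 hfB hgB (hf2.trans he'2)
      subst this
      rw [he'2]
      exact he'p
    have hP' := not_blocks_man hB (hA.1.1 he'A) he'B hwe'
    exact ⟨e', ⟨he'A, he'B, hP'⟩, g, hgB, hg1, he'2.symm, by rw [he'2]; exact he'p⟩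
  have hF : ∀ e, ∃ e', Good e →
      Good e' ∧ ∃ g ∈ B, g.1 = e.1 ∧ g.2 = e'.2 ∧ G.pJ e'.2 e' g := by
    intro e
    by_cases h : Good e
    · obtain ⟨e', h1, h2⟩ := step e h
      exact ⟨e', fun _ => ⟨h1, h2⟩⟩
    · exact ⟨e, fun h' => absurd h' h⟩
  choose F hF using hF
  set seq : ℕ → I × J := fun n => F^[n] e₀ with hseqdef
  have hseq0 : seq 0 = e₀ := rfl
  have hseqS : ∀ n, seq (n + 1) = F (seq n) := fun n => Function.iterate_succ_apply' F n e₀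
  have hGood : ∀ n, Good (seq n) := by
    intro n
    induction n with
    | zero => exact ⟨he₀A, he₀B, hP⟩
    | succ n ih =>
      rw [hseqS]
      exact (hF _ ih).1
  have hRel : ∀ n, ∃ g ∈ B, g.1 = (seq n).1 ∧ g.2 = (seq (n + 1)).2 ∧
      G.pJ (seq (n + 1)).2 (seq (n + 1)) g := by
    intro n
    rw [hseqS]
    exact (hF _ (hGood n)).2
  have back : ∀ a b, seq (a + 1) = seq (b + 1) → seq a = seq b := by
    intro a b h
    obtain ⟨g₁, hg₁B, h₁1, h₁2, _⟩ := hRel a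
    obtain ⟨g₂, hg₂B, h₂1, h₂2, _⟩ := hRel b
    have hg : g₁ = g₂ := uniq2 hB.1 hg₁B hg₂B (by rw [h₁2, h₂2, h])
    exact uniq1 hA.1 (hGood a).1 (hGood b).1 (by rw [← h₁1, hg, h₂1])
  have shift : ∀ i d, seq i = seq (i + d) → seq 0 = seq d := by
    intro i
    induction i with
    | zero => intro d h; simpa using h
    | succ n ih =>
      intro d h
      have he : n + 1 + d = (n + d) + 1 := by omega
      rw [he] at h
      exact ih d (back n (n + d) h)
  obtain ⟨i, j, hij, hseqij⟩ := Finite.exists_ne_map_eq_of_infinite seq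
  have key : ∃ d, 0 < d ∧ seq 0 = seq d := by
    rcases lt_or_gt_of_ne hij with h | h
    · refine ⟨j - i, by omega, shift i (j - i) ?_⟩
      have : i + (j - i) = j := by omega
      rw [this]
      exact hseqij
    · refine ⟨i - j, by omega, shift j (i - j) ?_⟩
      have : j + (i - j) = i := by omega
      rw [this]
      exact hseqij.symm
  obtain ⟨d, hd0, hd⟩ := key
  obtain ⟨g, hgB, hg1, hg2, hgp⟩ := hRel (d - 1)
  have hdd : d - 1 + 1 = d := by omega
  rw [hdd, ← hd, hseq0] at hg2 hgp
  exact ⟨g, hgB, hg2, hgp, seq (d - 1), (hGood (d - 1)).1, hg1.symm⟩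

end JoinAux

section JoinAux2

variable {I J : Type}

def PrefSystem.flip [DecidableEq I] [DecidableEq J] (G : PrefSystem I J) : PrefSystem J I where
  E := G.E.image Prod.swap
  pI := fun w e f => G.pJ w e.swap f.swap
  pJ := fun m e f => G.pI m e.swap f.swap
  pI_irrefl := fun w e => G.pJ_irrefl w e.swap
  pI_trans := fun w e f g h1 h2 => G.pJ_trans w e.swap f.swap g.swap h1 h2
  pI_total := by
    intro w e f he hf he1 hf1 hne
    simp only [Finset.mem_image] at he hf
    obtain ⟨a, haE, ha⟩ := he
    obtain ⟨b, hbE, hb⟩ := hf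
    have ha' : e.swap = a := by rw [← ha]; simp
    have hb' : f.swap = b := by rw [← hb]; simp
    refine G.pJ_total w e.swap f.swap (ha' ▸ haE) (hb' ▸ hbE) he1 hf1 ?_
    intro h
    exact hne (by simpa using congrArg Prod.swap h)
  pJ_irrefl := fun m e => G.pI_irrefl m e.swap
  pJ_trans := fun m e f g h1 h2 => G.pI_trans m e.swap f.swap g.swap h1 h2
  pJ_total := by
    intro m e f he hf he2 hf2 hne
    simp only [Finset.mem_image] at he hf
    obtain ⟨a, haE, ha⟩ := he
    obtain ⟨b, hbE, hb⟩ := hf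
    have ha' : e.swap = a := by rw [← ha]; simp
    have hb' : f.swap = b := by rw [← hb]; simp
    refine G.pI_total m e.swap f.swap (ha' ▸ haE) (hb' ▸ hbE) he2 hf2 ?_
    intro h
    exact hne (by simpa using congrArg Prod.swap h)

lemma mem_image_swap {A : Finset (I × J)} {e : J × I} [DecidableEq I] [DecidableEq J] :
    e ∈ A.image Prod.swap ↔ e.swap ∈ A := by
  simp only [Finset.mem_image]
  constructor
  · rintro ⟨a, ha, rfl⟩; simpa using ha
  · intro h; exact ⟨e.swap, h, by simp⟩

lemma flip_stable {G : PrefSystem I J} [DecidableEq I] [DecidableEq J]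
    {A : Finset (I × J)} (hA : IsStable G A) :
    IsStable G.flip (A.image Prod.swap) := by
  obtain ⟨⟨hsub, hmat⟩, hstab⟩ := hA
  refine ⟨⟨?_, ?_⟩, ?_⟩
  · intro e he
    rw [mem_image_swap] at he
    show e ∈ G.E.image Prod.swap
    rw [mem_image_swap]
    exact hsub he
  · intro e he f hf hne
    rw [mem_image_swap] at he hf
    have hne' : e.swap ≠ f.swap := fun h => hne (by simpa using congrArg Prod.swap h)
    have := hmat e.swap he f.swap hf hne'
    exact ⟨this.2, this.1⟩
  · intro e hbl
    obtain ⟨heE, heA, hman, hwom⟩ := hbl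
    rw [show (G.flip.E) = G.E.image Prod.swap from rfl, mem_image_swap] at heE
    apply hstab e.swap
    refine ⟨heE, fun h => heA (mem_image_swap.2 (by simpa using h)), ?_, ?_⟩
    · intro f hf hf1
      have := hwom f.swap (mem_image_swap.2 (by simpa using hf)) (by simpa using hf1)
      simpa [PrefSystem.flip] using this
    · intro f hf hf2
      have := hman f.swap (mem_image_swap.2 (by simpa using hf)) (by simpa using hf2)
      simpa [PrefSystem.flip] using this

/-- Rural hospitals, I-side: a man covered by `B` is covered by `A`. -/
lemma coveredI {G : PrefSystem I J} [Fintype I] [Fintype J]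
    {A B : Finset (I × J)} (hA : IsStable G A) (hB : IsStable G B)
    {m : I} (h : ∃ f ∈ B, f.1 = m) : ∃ e ∈ A, e.1 = m := by
  by_contra hm
  push_neg at hm
  obtain ⟨f₀, hf₀B, hf₀1⟩ := h
  have hf₀A : f₀ ∉ A := fun h => hm f₀ h hf₀1
  have hmanf₀ : ∀ g ∈ A, g.1 = f₀.1 → G.pI f₀.1 f₀ g := by
    intro g hgA hg1
    exact absurd (hg1.trans hf₀1) (hm g hgA)
  obtain ⟨e₀, he₀A, he₀2, he₀p⟩ := not_blocks_woman hA (hB.1.1 hf₀B) hf₀A hmanf₀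
  have he₀B : e₀ ∉ B := by
    intro h
    have : e₀ = f₀ := uniq2 hB.1 h hf₀B he₀2
    subst this
    exact G.pJ_irrefl _ _ he₀p
  have hw : ∀ f ∈ B, f.2 = e₀.2 → G.pJ e₀.2 e₀ f := by
    intro f hfB hf2
    have : f = f₀ := uniq2 hB.1 hfB hf₀B (hf2.trans he₀2)
    subst this
    rw [he₀2]
    exact he₀p
  have hP := not_blocks_man hB (hA.1.1 he₀A) he₀B hw
  obtain ⟨g, hgB, hg2, _, e', he'A, he'1⟩ := chain hA hB he₀A he₀B hP
  have : g = f₀ := uniq2 hB.1 hgB hf₀B (hg2.trans he₀2)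
  subst this
  exact hm e' he'A (he'1.trans hf₀1)

/-- Rural hospitals, J-side. -/
lemma coveredJ {G : PrefSystem I J} [Fintype I] [Fintype J] [DecidableEq I] [DecidableEq J]
    {A B : Finset (I × J)} (hA : IsStable G A) (hB : IsStable G B)
    {w : J} (h : ∃ f ∈ B, f.2 = w) : ∃ e ∈ A, e.2 = w := by
  obtain ⟨f, hfB, hf2⟩ := h
  have := coveredI (G := G.flip) (flip_stable hA) (flip_stable hB)
    (m := w) ⟨f.swap, mem_image_swap.2 (by simpa using hfB), by simpa using hf2⟩
  obtain ⟨e, heA, he1⟩ := this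
  rw [mem_image_swap] at heA
  exact ⟨e.swap, heA, by simpa using he1⟩

/-- Key comparison: if `e ∈ A` and its man strictly prefers his `B`-edge,
then `e`'s woman strictly prefers `e` to her `B`-edge. -/
lemma chooseJ {G : PrefSystem I J} [Fintype I] [Fintype J]
    {A B : Finset (I × J)} (hA : IsStable G A) (hB : IsStable G B)
    {e f : I × J} (heA : e ∈ A) (hfB : f ∈ B) (hne : e ≠ f) (h2 : e.2 = f.2)
    (hP : ∃ g ∈ B, g.1 = e.1 ∧ G.pI e.1 g e) : G.pJ e.2 e f := by
  have heB : e ∉ B := fun h => hne (uniq2 hB.1 h hfB h2)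
  obtain ⟨g, hgB, hg2, hgp, _⟩ := chain hA hB heA heB hP
  have : g = f := uniq2 hB.1 hgB hfB (hg2.trans h2)
  subst this
  exact hgp

end JoinAux2

section JoinAux3

variable {I J : Type} [Fintype I] [Fintype J] [DecidableEq I] [DecidableEq J]
variable {G : PrefSystem I J} {A B N : Finset (I × J)}

/-- At a woman covered by `A`, `N` contains an edge at least as good for her
as her `A`-edge. -/
lemma NW_aux (hA : IsStable G A) (hB : IsStable G B)
    (hN : ∀ e : I × J, e ∈ N ↔
      ((e ∈ A ∧ e ∈ B) ∨
       (e ∈ A ∧ ∃ f ∈ B, f.1 = e.1 ∧ G.pI e.1 f e) ∨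
       (e ∈ B ∧ ∃ f ∈ A, f.1 = e.1 ∧ G.pI e.1 f e)))
    {h : I × J} {w : J} (hhA : h ∈ A) (hh2 : h.2 = w) :
    ∃ f ∈ N, f.2 = w ∧ (f = h ∨ G.pJ w f h) := by
  obtain ⟨k, hkB, hk2⟩ := coveredJ hB hA ⟨h, hhA, hh2⟩
  by_cases hk : h = k
  · exact ⟨h, (hN h).2 (Or.inl ⟨hhA, hk ▸ hkB⟩), hh2, Or.inl rfl⟩
  · rcases G.pJ_total w h k (hA.1.1 hhA) (hB.1.1 hkB) hh2 hk2 hk with hp | hp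
    · have hhB : h ∉ B := fun hB' => hk (uniq2 hB.1 hB' hkB (hh2.trans hk2.symm))
      have hwom : ∀ f ∈ B, f.2 = h.2 → G.pJ h.2 h f := by
        intro f hfB hf2
        have : f = k := uniq2 hB.1 hfB hkB ((hf2.trans hh2).trans hk2.symm)
        subst this
        rw [hh2]
        exact hp
      obtain ⟨g, hgB, hg1, hgp⟩ := not_blocks_man hB (hA.1.1 hhA) hhB hwom
      exact ⟨h, (hN h).2 (Or.inr (Or.inl ⟨hhA, g, hgB, hg1, hgp⟩)), hh2, Or.inl rfl⟩
    · have hkA : k ∉ A := fun hA' => hk (uniq2 hA.1 hhA hA' (hh2.trans hk2.symm))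
      have hwom : ∀ f ∈ A, f.2 = k.2 → G.pJ k.2 k f := by
        intro f hfA hf2
        have : f = h := uniq2 hA.1 hfA hhA ((hf2.trans hk2).trans hh2.symm)
        subst this
        rw [hk2]
        exact hp
      obtain ⟨g, hgA, hg1, hgp⟩ := not_blocks_man hA (hB.1.1 hkB) hkA hwom
      exact ⟨k, (hN k).2 (Or.inr (Or.inr ⟨hkB, g, hgA, hg1, hgp⟩)), hk2, Or.inr hp⟩

/-- At a man covered by `A`, `N` has an edge. -/
lemma NM_aux (hA : IsStable G A) (hB : IsStable G B)
    (hN : ∀ e : I × J, e ∈ N ↔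
      ((e ∈ A ∧ e ∈ B) ∨
       (e ∈ A ∧ ∃ f ∈ B, f.1 = e.1 ∧ G.pI e.1 f e) ∨
       (e ∈ B ∧ ∃ f ∈ A, f.1 = e.1 ∧ G.pI e.1 f e)))
    {h : I × J} (hhA : h ∈ A) : ∃ f ∈ N, f.1 = h.1 := by
  obtain ⟨k, hkB, hk1⟩ := coveredI hB hA ⟨h, hhA, rfl⟩
  by_cases hk : h = k
  · exact ⟨h, (hN h).2 (Or.inl ⟨hhA, hk ▸ hkB⟩), rfl⟩
  · rcases G.pI_total h.1 h k (hA.1.1 hhA) (hB.1.1 hkB) rfl hk1 hk with hp | hp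
    · refine ⟨k, (hN k).2 (Or.inr (Or.inr ⟨hkB, h, hhA, hk1.symm, ?_⟩)), hk1⟩
      rw [hk1]
      exact hp
    · exact ⟨h, (hN h).2 (Or.inr (Or.inl ⟨hhA, k, hkB, hk1, hp⟩)), rfl⟩

lemma block_core (hA : IsStable G A) (hB : IsStable G B)
    (hN : ∀ e : I × J, e ∈ N ↔
      ((e ∈ A ∧ e ∈ B) ∨
       (e ∈ A ∧ ∃ f ∈ B, f.1 = e.1 ∧ G.pI e.1 f e) ∨
       (e ∈ B ∧ ∃ f ∈ A, f.1 = e.1 ∧ G.pI e.1 f e)))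
    {e : I × J} (heE : e ∈ G.E) (heN : e ∉ N)
    (hbw : ∀ f ∈ N, f.2 = e.2 → G.pJ e.2 e f)
    (hman : ∀ f ∈ A, f.1 = e.1 → G.pI e.1 e f) (heA : e ∉ A) : False := by
  obtain ⟨h, hhA, hh2, hhp⟩ := not_blocks_woman hA heE heA hman
  obtain ⟨f, hfN, hf2, hor⟩ := NW_aux hA hB hN hhA hh2
  have h1 : G.pJ e.2 e f := hbw f hfN hf2
  have h2 : G.pJ e.2 e h := by
    rcases hor with rfl | hp
    · exact h1
    · exact G.pJ_trans _ _ _ _ h1 hp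
  exact G.pJ_irrefl _ _ (G.pJ_trans _ _ _ _ h2 hhp)

end JoinAux3


/-- the join `M ∨ L` of two stable matchings — consisting of all
common edges together with, at each covered vertex `m ∈ I`, the less preferred
of the `M`-edge and the `L`-edge at `m` — is again a stable matching.
Here `N` is characterized exactly as this edge set. -/
theorem join_is_stable {I J : Type} [Fintype I] [Fintype J]
    [DecidableEq I] [DecidableEq J] (G : PrefSystem I J)
    (M L : Finset (I × J)) (hM : IsStable G M) (hL : IsStable G L)
    (N : Finset (I × J))
    (hN : ∀ e : I × J, e ∈ N ↔
      ((e ∈ M ∧ e ∈ L) ∨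
       (e ∈ M ∧ ∃ f ∈ L, f.1 = e.1 ∧ G.pI e.1 f e) ∨
       (e ∈ L ∧ ∃ f ∈ M, f.1 = e.1 ∧ G.pI e.1 f e))) :
    IsStable G N := by
  classical
  have hN' : ∀ e : I × J, e ∈ N ↔
      ((e ∈ L ∧ e ∈ M) ∨
       (e ∈ L ∧ ∃ f ∈ M, f.1 = e.1 ∧ G.pI e.1 f e) ∨
       (e ∈ M ∧ ∃ f ∈ L, f.1 = e.1 ∧ G.pI e.1 f e)) := by
    intro e
    rw [hN e]
    constructor <;>
    · rintro (⟨h1, h2⟩ | h | h)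
      exacts [Or.inl ⟨h2, h1⟩, Or.inr (Or.inr h), Or.inr (Or.inl h)]
  have hNM : ∀ e ∈ N, e ∈ M ∨ e ∈ L := by
    intro e he
    rcases (hN e).1 he with ⟨h, -⟩ | ⟨h, -⟩ | ⟨h, -⟩
    · exact Or.inl h
    · exact Or.inl h
    · exact Or.inr h
  have hNE : N ⊆ G.E := by
    intro e he
    rcases hNM e he with h | h
    · exact hM.1.1 h
    · exact hL.1.1 h
  refine ⟨⟨hNE, ?_⟩, ?_⟩
  · intro e he f hf hne
    constructor
    · -- distinct first coordinates
      intro h1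
      rcases hNM e he with heM | heL <;> rcases hNM f hf with hfM | hfL
      · exact hne (uniq1 hM.1 heM hfM h1)
      · -- e ∈ M, f ∈ L
        by_cases heL : e ∈ L
        · exact hne (uniq1 hL.1 heL hfL h1)
        by_cases hfM : f ∈ M
        · exact hne (uniq1 hM.1 heM hfM h1)
        -- extract types
        rcases (hN e).1 he with ⟨-, h'⟩ | ⟨-, g, hgL, hg1, hgp⟩ | ⟨h', -⟩
        · exact heL h'
        · rcases (hN f).1 hf with ⟨h'', -⟩ | ⟨h'', -⟩ | ⟨-, g', hg'M, hg'1, hg'p⟩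
          · exact hfM h''
          · exact hfM h''
          · have hgf : g = f := uniq1 hL.1 hgL hfL (hg1.trans h1)
            have hg'e : g' = e := uniq1 hM.1 hg'M heM (hg'1.trans h1.symm)
            subst hgf; subst hg'e
            rw [← h1] at hg'p
            exact G.pI_irrefl _ _ (G.pI_trans _ _ _ _ hg'p hgp)
        · exact heL h'
      · -- e ∈ L, f ∈ M (symmetric)
        by_cases hfL : f ∈ L
        · exact hne (uniq1 hL.1 heL hfL h1)
        by_cases heM : e ∈ M
        · exact hne (uniq1 hM.1 heM hfM h1)
        rcases (hN e).1 he with ⟨h', -⟩ | ⟨h', -⟩ | ⟨-, g, hgM, hg1, hgp⟩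
        · exact heM h'
        · exact heM h'
        · rcases (hN f).1 hf with ⟨-, h''⟩ | ⟨-, g', hg'L, hg'1, hg'p⟩ | ⟨h'', -⟩
          · exact hfL h''
          · have hgf : g = f := uniq1 hM.1 hgM hfM (hg1.trans h1)
            have hg'e : g' = e := uniq1 hL.1 hg'L heL (hg'1.trans h1.symm)
            subst hgf; subst hg'e
            rw [← h1] at hg'p
            exact G.pI_irrefl _ _ (G.pI_trans _ _ _ _ hg'p hgp)
          · exact hfL h''
      · exact hne (uniq1 hL.1 heL hfL h1)
    · -- distinct second coordinates
      intro h2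
      rcases hNM e he with heM | heL <;> rcases hNM f hf with hfM | hfL
      · exact hne (uniq2 hM.1 heM hfM h2)
      · by_cases heL : e ∈ L
        · exact hne (uniq2 hL.1 heL hfL h2)
        by_cases hfM : f ∈ M
        · exact hne (uniq2 hM.1 heM hfM h2)
        rcases (hN e).1 he with ⟨-, h'⟩ | ⟨-, g, hgL, hg1, hgp⟩ | ⟨h', -⟩
        · exact heL h'
        · rcases (hN f).1 hf with ⟨h'', -⟩ | ⟨h'', -⟩ | ⟨-, g', hg'M, hg'1, hg'p⟩
          · exact hfM h''
          · exact hfM h''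
          · have hp1 : G.pJ e.2 e f :=
              chooseJ hM hL heM hfL hne h2 ⟨g, hgL, hg1, hgp⟩
            have hp2 : G.pJ f.2 f e :=
              chooseJ hL hM hfL heM (Ne.symm hne) h2.symm ⟨g', hg'M, hg'1, hg'p⟩
            rw [← h2] at hp2
            exact G.pJ_irrefl _ _ (G.pJ_trans _ _ _ _ hp1 hp2)
        · exact heL h'
      · by_cases hfL : f ∈ L
        · exact hne (uniq2 hL.1 heL hfL h2)
        by_cases heM : e ∈ M
        · exact hne (uniq2 hM.1 heM hfM h2)
        rcases (hN e).1 he with ⟨h', -⟩ | ⟨h', -⟩ | ⟨-, g, hgM, hg1, hgp⟩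
        · exact heM h'
        · exact heM h'
        · rcases (hN f).1 hf with ⟨-, h''⟩ | ⟨-, g', hg'L, hg'1, hg'p⟩ | ⟨h'', -⟩
          · exact hfL h''
          · have hp1 : G.pJ e.2 e f :=
              chooseJ hL hM heL hfM hne h2 ⟨g, hgM, hg1, hgp⟩
            have hp2 : G.pJ f.2 f e :=
              chooseJ hM hL hfM heL (Ne.symm hne) h2.symm ⟨g', hg'L, hg'1, hg'p⟩
            rw [← h2] at hp2
            exact G.pJ_irrefl _ _ (G.pJ_trans _ _ _ _ hp1 hp2)
          · exact hfL h''
      · exact hne (uniq2 hL.1 heL hfL h2)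
  · -- no blocking edge
    intro e hbl
    obtain ⟨heE, heN, hbm, hbw⟩ := hbl
    by_cases hm : (∃ h ∈ M, h.1 = e.1) ∨ (∃ h ∈ L, h.1 = e.1)
    · have hex : ∃ f ∈ N, f.1 = e.1 := by
        rcases hm with ⟨h, hh, h1⟩ | ⟨h, hh, h1⟩
        · obtain ⟨f, hfN, hf1⟩ := NM_aux hM hL hN hh
          exact ⟨f, hfN, hf1.trans h1⟩
        · obtain ⟨f, hfN, hf1⟩ := NM_aux hL hM hN' hh
          exact ⟨f, hfN, hf1.trans h1⟩
      obtain ⟨f, hfN, hf1⟩ := hex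
      have hpef : G.pI e.1 e f := hbm f hfN hf1
      rcases hNM f hfN with hfM | hfL
      · refine block_core hM hL hN heE heN hbw ?_ ?_
        · intro g hgM hg1
          have : g = f := uniq1 hM.1 hgM hfM (hg1.trans hf1.symm)
          subst this
          exact hpef
        · intro heM
          exact heN ((uniq1 hM.1 heM hfM hf1.symm) ▸ hfN)
      · refine block_core hL hM hN' heE heN hbw ?_ ?_
        · intro g hgL hg1
          have : g = f := uniq1 hL.1 hgL hfL (hg1.trans hf1.symm)
          subst this
          exact hpef
        · intro heL
          exact heN ((uniq1 hL.1 heL hfL hf1.symm) ▸ hfN)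
    · push_neg at hm
      refine block_core hM hL hN heE heN hbw ?_ ?_
      · intro g hgM hg1
        exact absurd hg1 (hm.1 g hgM)
      · intro heM
        exact hm.1 e heM rfl
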